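/- Let G: ℂ → ℂ be a C¹ orientation-preserving diffeomorphism (so |G_z|² − |G_z̄|² > 0 everywhere), let g: 𝔻 → ℂ be C¹, and set φ = G⁻¹ ∘ g. Then φ_z̄ = (1/(|G_z|² − |G_z̄|²)) ( G̅_z g_z̄ − G_z̄ g̅_z ), where G_z, G_z̄ are evaluated at φ(z). In particular, if there exist functions ℒ, ℳ on ℂ with ℳ nowhere zero such that ℒ(G)G_z + ℳ(G)G̅_z = 0 identically and ℒ(g)g_z + ℳ(g)g̅_z = 0 identically, then φ is holomorphic. -/

import Mathlib

open Complex ComplexConjugate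

noncomputable def wZ (f : ℂ → ℂ) (z : ℂ) : ℂ :=
  (fderiv ℝ f z 1 - I * fderiv ℝ f z I) / 2

noncomputable def wZBar (f : ℂ → ℂ) (z : ℂ) : ℂ :=
  (fderiv ℝ f z 1 + I * fderiv ℝ f z I) / 2

lemma fderiv_apply_wirtinger (f : ℂ → ℂ) (z v : ℂ) :
    fderiv ℝ f z v = wZ f z * v + wZBar f z * conj v := by
  obtain ⟨r, s, rfl⟩ : ∃ r s : ℝ, v = (r : ℂ) + (s : ℂ) * I :=
    ⟨v.re, v.im, (Complex.re_add_im v).symm⟩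
  have hv : (r : ℂ) + (s : ℂ) * I = r • (1 : ℂ) + s • I := by
    simp [Complex.real_smul]
  rw [hv, map_add, map_smul, map_smul]
  simp only [Complex.real_smul, smul_eq_mul, map_add, map_mul, Complex.conj_I,
    Complex.conj_ofReal, map_one, wZ, wZBar]
  set A := fderiv ℝ f z 1
  set B := fderiv ℝ f z I
  linear_combination ((s : ℂ) * B) * Complex.I_sq

lemma wZ_comp (F f : ℂ → ℂ) (z : ℂ) (hF : DifferentiableAt ℝ F (f z))
    (hf : DifferentiableAt ℝ f z) :
    wZ (F ∘ f) z = wZ F (f z) * wZ f z + wZBar F (f z) * conj (wZBar f z) ∧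
    wZBar (F ∘ f) z = wZ F (f z) * wZBar f z + wZBar F (f z) * conj (wZ f z) := by
  have hcomp : fderiv ℝ (F ∘ f) z = (fderiv ℝ F (f z)).comp (fderiv ℝ f z) :=
    fderiv_comp z hF hf
  have key : ∀ v : ℂ, fderiv ℝ (F ∘ f) z v =
      wZ F (f z) * (fderiv ℝ f z v) + wZBar F (f z) * conj (fderiv ℝ f z v) := by
    intro v
    rw [hcomp, ContinuousLinearMap.comp_apply]
    exact fderiv_apply_wirtinger F (f z) _
  set p := wZ F (f z); set q := wZBar F (f z)
  set a := wZ f z; set b := wZBar f z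
  have e1 : fderiv ℝ f z 1 = a + b := by
    simpa using fderiv_apply_wirtinger f z 1
  have eI : fderiv ℝ f z I = a * I - b * I := by
    have h := fderiv_apply_wirtinger f z I
    rw [Complex.conj_I] at h
    linear_combination h
  have k1 : fderiv ℝ (F ∘ f) z 1 = p * (a + b) + q * (conj a + conj b) := by
    rw [key 1, e1, map_add]
  have kI : fderiv ℝ (F ∘ f) z I = p * (a * I - b * I) + q * (conj b * I - conj a * I) := by
    rw [key I, eI]
    simp only [map_sub, map_mul, Complex.conj_I]
    ring
  constructor
  · rw [wZ, k1, kI]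
    linear_combination (-(p * (a - b) + q * (conj b - conj a)) / 2) * Complex.I_sq
  · rw [wZBar, k1, kI]
    linear_combination ((p * (a - b) + q * (conj b - conj a)) / 2) * Complex.I_sq

lemma wZ_conj (f : ℂ → ℂ) (z : ℂ) : wZ (fun w => conj (f w)) z = conj (wZBar f z) := by
  have h : (fun w => conj (f w)) = ⇑Complex.conjCLE ∘ f := rfl
  rw [h, wZ, wZBar, Complex.conjCLE.comp_fderiv]
  simp only [ContinuousLinearMap.comp_apply, ContinuousLinearEquiv.coe_coe,
    Complex.conjCLE_apply, map_div₀, map_add, map_mul, Complex.conj_I, map_ofNat]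
  ring

theorem transition_map_holomorphic (G Ginv g : ℂ → ℂ)
    (hG : ContDiff ℝ 1 G) (hg : ContDiffOn ℝ 1 g (Metric.ball (0 : ℂ) 1))
    (hGinv₁ : Function.LeftInverse Ginv G) (hGinv₂ : Function.RightInverse Ginv G)
    (hGinvC : ContDiff ℝ 1 Ginv)
    (horient : ∀ z : ℂ, ‖wZ G z‖ ^ 2 - ‖wZBar G z‖ ^ 2 > 0) :
    (∀ z ∈ Metric.ball (0 : ℂ) 1,
      wZBar (Ginv ∘ g) z =
        (1 / ((‖wZ G (Ginv (g z))‖ ^ 2 : ℂ) -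
            (‖wZBar G (Ginv (g z))‖ ^ 2 : ℂ))) *
          (conj (wZ G (Ginv (g z))) * wZBar g z -
            wZBar G (Ginv (g z)) * conj (wZ g z))) ∧
    (∀ L M : ℂ → ℂ, (∀ q : ℂ, M q ≠ 0) →
      (∀ z : ℂ, L (G z) * wZ G z + M (G z) * wZ (fun w => conj (G w)) z = 0) →
      (∀ z ∈ Metric.ball (0 : ℂ) 1,
        L (g z) * wZ g z + M (g z) * wZ (fun w => conj (g w)) z = 0) →
      ∀ z ∈ Metric.ball (0 : ℂ) 1, wZBar (Ginv ∘ g) z = 0) := by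
  have hGd : ∀ x : ℂ, DifferentiableAt ℝ G x := fun x => (hG.differentiable one_ne_zero) x
  have hGinvd : ∀ x : ℂ, DifferentiableAt ℝ Ginv x := fun x => (hGinvC.differentiable one_ne_zero) x
  have hgd : ∀ z ∈ Metric.ball (0 : ℂ) 1, DifferentiableAt ℝ g z := fun z hz =>
    ((hg.differentiableOn one_ne_zero) z hz).differentiableAt (Metric.isOpen_ball.mem_nhds hz)
  have hJcast : ∀ p : ℂ, (‖wZ G p‖ ^ 2 : ℂ) - (‖wZBar G p‖ ^ 2 : ℂ)
      = wZ G p * conj (wZ G p) - wZBar G p * conj (wZBar G p) := by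
    intro p
    rw [Complex.mul_conj, Complex.mul_conj, ← Complex.sq_norm, ← Complex.sq_norm]
    push_cast
    ring
  have hJne : ∀ p : ℂ, wZ G p * conj (wZ G p) - wZBar G p * conj (wZBar G p) ≠ 0 := by
    intro p hc
    rw [← hJcast p] at hc
    have h := horient p
    have h0 : (‖wZ G p‖ ^ 2 - ‖wZBar G p‖ ^ 2 : ℝ) = 0 := by
      exact_mod_cast hc
    linarith
  have hinv : ∀ p : ℂ,
      wZ Ginv (G p) = conj (wZ G p) /
        (wZ G p * conj (wZ G p) - wZBar G p * conj (wZBar G p)) ∧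
      wZBar Ginv (G p) = -wZBar G p /
        (wZ G p * conj (wZ G p) - wZBar G p * conj (wZBar G p)) := by
    intro p
    have hid : Ginv ∘ G = id := funext hGinv₁
    have hc := wZ_comp Ginv G p (hGinvd _) (hGd _)
    rw [hid] at hc
    have hwZid : wZ (id : ℂ → ℂ) p = 1 := by
      norm_num [wZ, fderiv_id, Complex.I_mul_I]
    have hwZBarid : wZBar (id : ℂ → ℂ) p = 0 := by
      norm_num [wZBar, fderiv_id, Complex.I_mul_I]
    set a := wZ G p; set b := wZBar G p
    set P := wZ Ginv (G p); set Q := wZBar Ginv (G p)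
    have eq1 : P * a + Q * conj b = 1 := hc.1.symm.trans hwZid
    have eq2 : P * b + Q * conj a = 0 := hc.2.symm.trans hwZBarid
    have hJ := hJne p
    constructor
    · rw [eq_div_iff hJ]
      linear_combination (conj a) * eq1 - (conj b) * eq2
    · rw [eq_div_iff hJ]
      linear_combination (-b) * eq1 + a * eq2
  have claim1 : ∀ z ∈ Metric.ball (0 : ℂ) 1,
      wZBar (Ginv ∘ g) z =
        (1 / ((‖wZ G (Ginv (g z))‖ ^ 2 : ℂ) -
            (‖wZBar G (Ginv (g z))‖ ^ 2 : ℂ))) *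
          (conj (wZ G (Ginv (g z))) * wZBar g z -
            wZBar G (Ginv (g z)) * conj (wZ g z)) := by
    intro z hz
    have hGp : G (Ginv (g z)) = g z := hGinv₂ (g z)
    have hc := (wZ_comp Ginv g z (hGinvd _) (hgd z hz)).2
    have h1 := (hinv (Ginv (g z))).1
    have h2 := (hinv (Ginv (g z))).2
    rw [hGp] at h1 h2
    rw [hc, h1, h2, hJcast (Ginv (g z))]
    set a := wZ G (Ginv (g z)); set b := wZBar G (Ginv (g z))
    have hJ := hJne (Ginv (g z))
    field_simp
    ring
  refine ⟨claim1, ?_⟩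
  intro L M hM hLG hLg z hz
  have hGp : G (Ginv (g z)) = g z := hGinv₂ (g z)
  have hG_eq := hLG (Ginv (g z))
  rw [wZ_conj, hGp] at hG_eq
  have hg_eq := hLg z hz
  rw [wZ_conj] at hg_eq
  set a := wZ G (Ginv (g z)); set b := wZBar G (Ginv (g z))
  set ag := wZ g z; set bg := wZBar g z
  have c1 : conj (L (g z)) * conj a + conj (M (g z)) * b = 0 := by
    have := congrArg conj hG_eq
    simpa [map_add, map_mul] using this
  have c2 : conj (L (g z)) * conj ag + conj (M (g z)) * bg = 0 := by
    have := congrArg conj hg_eq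
    simpa [map_add, map_mul] using this
  have hMne : conj (M (g z)) ≠ 0 := by
    simpa using hM (g z)
  have hnum : conj (M (g z)) * (conj a * bg - b * conj ag) = 0 := by
    linear_combination (conj a) * c2 - (conj ag) * c1
  have hnum' : conj a * bg - b * conj ag = 0 :=
    (mul_eq_zero.mp hnum).resolve_left hMne
  rw [claim1 z hz, hnum', mul_zero]
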